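/- For the Poisson bi-vector P on ℝ³ with P^{12} = x²y, P^{13} = -x(xz+1), P^{23} = xyz, define Γ₂'(P)^{im} = ∑ (∂²P^{ij}/∂x^k∂x^ℓ)(∂²P^{km}/∂x^{k'}∂x^{ℓ'})(∂P^{k'ℓ}/∂x^{m'})(∂P^{m'ℓ'}/∂x^j) and let Γ₂(P)^{im} = ½(Γ₂'(P)^{im} - Γ₂'(P)^{mi}) be its antisymmetrization. Then Γ₂(P)^{12} = x⁵y, Γ₂(P)^{13} = x⁴(xz+2), Γ₂(P)^{23} = -2x³y. -/

import Mathlib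

/-- Partial derivative in the `i`-th coordinate direction on `ℝ³ = Fin 3 → ℝ`. -/
noncomputable def pd (i : Fin 3) (f : (Fin 3 → ℝ) → ℝ) : (Fin 3 → ℝ) → ℝ :=
  fun x => fderiv ℝ f x (Pi.single i 1)

/-- The specific bi-vector on `ℝ³` with `P^{12} = x²y`, `P^{13} = -x(xz+1)`,
`P^{23} = xyz`. -/
noncomputable def Pmat : (Fin 3 → ℝ) → Matrix (Fin 3) (Fin 3) ℝ := fun x =>
  !![0, x 0 ^ 2 * x 1, -(x 0 * (x 0 * x 2 + 1));
     -(x 0 ^ 2 * x 1), 0, x 0 * x 1 * x 2;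
     x 0 * (x 0 * x 2 + 1), -(x 0 * x 1 * x 2), 0]

/-- The entries of `Pmat` as functions on `ℝ³`. -/
noncomputable def Pf (i j : Fin 3) : (Fin 3 → ℝ) → ℝ := fun x => Pmat x i j

/-- The second (non-antisymmetrized) Kontsevich tetrahedral operator
`Γ₂'(P)^{im} = ∑ ∂²P^{ij}/∂x^k∂x^ℓ · ∂²P^{km}/∂x^{k'}∂x^{ℓ'} · ∂P^{k'ℓ}/∂x^{m'} · ∂P^{m'ℓ'}/∂x^j`. -/
noncomputable def Γ₂' (i m : Fin 3) : (Fin 3 → ℝ) → ℝ := fun x =>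
  ∑ j, ∑ k, ∑ l, ∑ k', ∑ l', ∑ m',
    pd k (pd l (Pf i j)) x * pd k' (pd l' (Pf k m)) x * pd m' (Pf k' l) x * pd j (Pf m' l') x

/-- The antisymmetrization `Γ₂ = ½(Γ₂'(1,2) − Γ₂'(2,1))`. -/
noncomputable def Γ₂ (i m : Fin 3) : (Fin 3 → ℝ) → ℝ := fun x =>
  (Γ₂' i m x - Γ₂' m i x) / 2


lemma diff_coord (i : Fin 3) : Differentiable ℝ (fun x : Fin 3 → ℝ => x i) :=
  (ContinuousLinearMap.proj i : (Fin 3 → ℝ) →L[ℝ] ℝ).differentiable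

lemma pd_coord (k i : Fin 3) (x : Fin 3 → ℝ) :
    pd k (fun y => y i) x = (Pi.single k 1 : Fin 3 → ℝ) i := by
  unfold pd
  rw [show (fun y : Fin 3 → ℝ => y i) = (ContinuousLinearMap.proj i : (Fin 3 → ℝ) →L[ℝ] ℝ) from rfl,
    ContinuousLinearMap.fderiv]
  rfl

lemma pd_mul (k : Fin 3) {f g : (Fin 3 → ℝ) → ℝ} (hf : Differentiable ℝ f)
    (hg : Differentiable ℝ g) (x : Fin 3 → ℝ) :
    pd k (fun y => f y * g y) x = pd k f x * g x + f x * pd k g x := by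
  unfold pd; rw [fderiv_fun_mul (hf x) (hg x)]; simp; ring

lemma pd_negp (k : Fin 3) (f : (Fin 3 → ℝ) → ℝ) (x : Fin 3 → ℝ) :
    pd k (fun y => -f y) x = -pd k f x := by
  unfold pd; rw [fderiv_fun_neg]; simp

lemma pd_add (k : Fin 3) {f g : (Fin 3 → ℝ) → ℝ} (hf : Differentiable ℝ f)
    (hg : Differentiable ℝ g) (x : Fin 3 → ℝ) :
    pd k (fun y => f y + g y) x = pd k f x + pd k g x := by
  unfold pd; rw [fderiv_fun_add (hf x) (hg x)]; simp

lemma pd_constp (k : Fin 3) (c : ℝ) (x : Fin 3 → ℝ) : pd k (fun _ => c) x = 0 := by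
  unfold pd; simp

lemma pd_sq (k : Fin 3) {f : (Fin 3 → ℝ) → ℝ} (hf : Differentiable ℝ f) (x : Fin 3 → ℝ) :
    pd k (fun y => f y ^ 2) x = 2 * f x * pd k f x := by
  have h : (fun y => f y ^ 2) = fun y => f y * f y := by funext y; ring
  rw [h, pd_mul k hf hf x]; ring

-- function-level lemmas
lemma pd_neg (k : Fin 3) (f : (Fin 3 → ℝ) → ℝ) :
    pd k (fun y => -f y) = fun x => -pd k f x := funext fun x => pd_negp k f x

lemma pd_const (k : Fin 3) (c : ℝ) : pd k (fun _ : Fin 3 → ℝ => c) = fun _ => 0 :=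
  funext fun x => pd_constp k c x

lemma pdA (l : Fin 3) : pd l (fun x : Fin 3 → ℝ => x 0 ^ 2 * x 1)
    = fun x => 2 * x 0 * x 1 * (Pi.single l 1 : Fin 3 → ℝ) 0
        + x 0 ^ 2 * (Pi.single l 1 : Fin 3 → ℝ) 1 := by
  funext x
  simp (disch := fun_prop) only [pd_mul, pd_add, pd_negp, pd_coord, pd_constp, pd_sq]
  ring

lemma pdB (l : Fin 3) : pd l (fun x : Fin 3 → ℝ => x 0 * (x 0 * x 2 + 1))
    = fun x => (2 * x 0 * x 2 + 1) * (Pi.single l 1 : Fin 3 → ℝ) 0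
        + x 0 ^ 2 * (Pi.single l 1 : Fin 3 → ℝ) 2 := by
  funext x
  simp (disch := fun_prop) only [pd_mul, pd_add, pd_negp, pd_coord, pd_constp, pd_sq]
  ring

lemma pdC (l : Fin 3) : pd l (fun x : Fin 3 → ℝ => x 0 * x 1 * x 2)
    = fun x => x 1 * x 2 * (Pi.single l 1 : Fin 3 → ℝ) 0
        + x 0 * x 2 * (Pi.single l 1 : Fin 3 → ℝ) 1
        + x 0 * x 1 * (Pi.single l 1 : Fin 3 → ℝ) 2 := by
  funext x
  simp (disch := fun_prop) only [pd_mul, pd_add, pd_negp, pd_coord, pd_constp, pd_sq]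
  ring

lemma pdA2 (k : Fin 3) (c d : ℝ) :
    pd k (fun x : Fin 3 → ℝ => 2 * x 0 * x 1 * c + x 0 ^ 2 * d)
    = fun x => (2 * x 1 * (Pi.single k 1 : Fin 3 → ℝ) 0
        + 2 * x 0 * (Pi.single k 1 : Fin 3 → ℝ) 1) * c
        + 2 * x 0 * (Pi.single k 1 : Fin 3 → ℝ) 0 * d := by
  funext x
  simp (disch := fun_prop) only [pd_mul, pd_add, pd_negp, pd_coord, pd_constp, pd_sq]
  ring

lemma pdB2 (k : Fin 3) (c d : ℝ) :
    pd k (fun x : Fin 3 → ℝ => (2 * x 0 * x 2 + 1) * c + x 0 ^ 2 * d)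
    = fun x => (2 * x 2 * (Pi.single k 1 : Fin 3 → ℝ) 0
        + 2 * x 0 * (Pi.single k 1 : Fin 3 → ℝ) 2) * c
        + 2 * x 0 * (Pi.single k 1 : Fin 3 → ℝ) 0 * d := by
  funext x
  simp (disch := fun_prop) only [pd_mul, pd_add, pd_negp, pd_coord, pd_constp, pd_sq]
  ring

lemma pdC2 (k : Fin 3) (a b c : ℝ) :
    pd k (fun x : Fin 3 → ℝ => x 1 * x 2 * a + x 0 * x 2 * b + x 0 * x 1 * c)
    = fun x => (x 2 * (Pi.single k 1 : Fin 3 → ℝ) 1 + x 1 * (Pi.single k 1 : Fin 3 → ℝ) 2) * a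
        + (x 2 * (Pi.single k 1 : Fin 3 → ℝ) 0 + x 0 * (Pi.single k 1 : Fin 3 → ℝ) 2) * b
        + (x 1 * (Pi.single k 1 : Fin 3 → ℝ) 0 + x 0 * (Pi.single k 1 : Fin 3 → ℝ) 1) * c := by
  funext x
  simp (disch := fun_prop) only [pd_mul, pd_add, pd_negp, pd_coord, pd_constp, pd_sq]
  ring

lemma Pf00 : Pf 0 0 = fun _ => 0 := rfl
lemma Pf01 : Pf 0 1 = fun x => x 0 ^ 2 * x 1 := rfl
lemma Pf02 : Pf 0 2 = fun x => -(x 0 * (x 0 * x 2 + 1)) := rfl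
lemma Pf10 : Pf 1 0 = fun x => -(x 0 ^ 2 * x 1) := rfl
lemma Pf11 : Pf 1 1 = fun _ => 0 := rfl
lemma Pf12 : Pf 1 2 = fun x => x 0 * x 1 * x 2 := rfl
lemma Pf20 : Pf 2 0 = fun x => x 0 * (x 0 * x 2 + 1) := rfl
lemma Pf21 : Pf 2 1 = fun x => -(x 0 * x 1 * x 2) := rfl
lemma Pf22 : Pf 2 2 = fun _ => 0 := rfl

set_option maxHeartbeats 4000000 in
theorem Γ₂_components :
    ∀ x : Fin 3 → ℝ,
      Γ₂ 0 1 x = x 0 ^ 5 * x 1 ∧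
      Γ₂ 0 2 x = x 0 ^ 4 * (x 0 * x 2 + 2) ∧
      Γ₂ 1 2 x = -2 * x 0 ^ 3 * x 1 := by
  intro x
  refine ⟨?_, ?_, ?_⟩ <;>
  · unfold Γ₂ Γ₂'
    simp only [Fin.sum_univ_three, Pf00, Pf01, Pf02, Pf10, Pf11, Pf12, Pf20, Pf21, Pf22,
      pd_neg, pd_const, pdA, pdB, pdC, pdA2, pdB2, pdC2]
    simp [Pi.single_apply]
    ring
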